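/- arXiv:2510.13764 — 3 statements merged into one kernel-verified Lean document; each statement's English description precedes it below -/
import Mathlib

section
/- For j ≥ 1, the divided difference operator satisfies ∂_{t-1} h_j(x_t, x_{t+1},...,x_b) = -h_{j-1}(x_{t-1}, x_t,...,x_b), where h_j denotes the complete homogeneous symmetric polynomial in the given variables. -/
variable {R : Type*} [CommRing R]

/-- The geometric series `Σ xⁿ tⁿ`, i.e. the formal power series `1/(1 - x·t)`:
it is the (unique) inverse of `1 - x·t` in `R⟦t⟧`. -/
noncomputable def geomInv (x : R) : PowerSeries R := PowerSeries.mk fun n => x ^ n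

/-- The generating function `E_A(t) = Π_{x ∈ A} (1 + x·t)` of the elementary symmetric
functions of an alphabet `A` (a finite multiset). -/
noncomputable def eGen (A : Multiset R) : PowerSeries R :=
  (A.map fun x => 1 + PowerSeries.C x * PowerSeries.X).prod

/-- The generating function `H_A(t) = Π_{x ∈ A} 1/(1 - x·t)` of the complete homogeneous
symmetric functions of an alphabet `A`. -/
noncomputable def hGen (A : Multiset R) : PowerSeries R :=
  (A.map fun x => geomInv x).prod

/-- `e_i(A)`: the `i`-th elementary symmetric function of the alphabet `A`. -/
noncomputable def eA (A : Multiset R) (i : ℕ) : R := PowerSeries.coeff i (eGen A)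

/-- `h_i(A)`: the `i`-th complete homogeneous symmetric function of the alphabet `A`. -/
noncomputable def hA (A : Multiset R) (i : ℕ) : R := PowerSeries.coeff i (hGen A)

/-- `e_i(A - B)`, defined by the generating function
`Π_{x ∈ A} (1 + x·t) · Π_{y ∈ B} 1/(1 + y·t)`. -/
noncomputable def eDiff (A B : Multiset R) (i : ℕ) : R :=
  PowerSeries.coeff i (eGen A * (B.map fun y => geomInv (-y)).prod)

/-- `h_i(A - B)`, defined by the generating function
`Π_{x ∈ A} 1/(1 - x·t) · Π_{y ∈ B} (1 - y·t)`. -/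
noncomputable def hDiff (A B : Multiset R) (i : ℕ) : R :=
  PowerSeries.coeff i (hGen A * (B.map fun y => 1 - PowerSeries.C y * PowerSeries.X).prod)

open PowerSeries in
lemma geomInv_mul_cancel (x : R) : (1 - C x * X) * geomInv x = 1 := by
  ext n
  cases n with
  | zero => simp [geomInv, coeff_zero_eq_constantCoeff]
  | succ n =>
    simp only [sub_mul, one_mul, map_sub, mul_assoc]
    rw [coeff_C_mul, coeff_succ_X_mul]
    simp [geomInv, pow_succ, mul_comm]

open PowerSeries in
lemma geomInv_sub (a c : R) :
    geomInv a - geomInv c = (C a - C c) * X * (geomInv a * geomInv c) := by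
  have h1 := geomInv_mul_cancel a
  have h2 := geomInv_mul_cancel c
  linear_combination geomInv c * h1 - geomInv a * h2

lemma map_geomInv {S : Type*} [CommRing S] (f : R →+* S) (x : R) :
    PowerSeries.map f (geomInv x) = geomInv (f x) := by
  ext n; simp [geomInv]

lemma map_hGen {S : Type*} [CommRing S] (f : R →+* S) (A : Multiset R) :
    PowerSeries.map f (hGen A) = hGen (A.map f) := by
  unfold hGen
  rw [map_multiset_prod, Multiset.map_map, Multiset.map_map]
  congr 1
  exact Multiset.map_congr rfl fun x _ => map_geomInv f x

lemma map_hA {S : Type*} [CommRing S] (f : R →+* S) (A : Multiset R) (i : ℕ) :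
    f (hA A i) = hA (A.map f) i := by
  rw [hA, hA, ← map_hGen, PowerSeries.coeff_map]

lemma hGen_cons (a : R) (A : Multiset R) : hGen (a ::ₘ A) = geomInv a * hGen A := by
  rw [hGen, hGen, Multiset.map_cons, Multiset.prod_cons]

open MvPolynomial

/-- The transposition operator `s_i` on `ℤ[x_1, x_2, …]` swapping `x_i` and `x_{i+1}`. -/
noncomputable def sN (i : ℕ) : MvPolynomial ℕ ℤ →ₐ[ℤ] MvPolynomial ℕ ℤ :=
  rename ⇑(Equiv.swap i (i + 1))

/-- `D` is the divided difference operator `∂_i`, characterized by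
`(x_i - x_{i+1}) * D P = P - s_i P`. -/
def IsDividedDiffN (i : ℕ) (D : MvPolynomial ℕ ℤ → MvPolynomial ℕ ℤ) : Prop :=
  ∀ P, (X i - X (i + 1)) * D P = P - sN i P

/-- For `j ≥ 1` and `2 ≤ t ≤ b`:
`∂_{t-1} h_j(x_t, …, x_b) = -h_{j-1}(x_{t-1}, x_t, …, x_b)`. -/
theorem divided_diff_hsym (b t j : ℕ) (ht : 2 ≤ t) (htb : t ≤ b) (hj : 1 ≤ j)
    (D : MvPolynomial ℕ ℤ → MvPolynomial ℕ ℤ) (hD : IsDividedDiffN (t - 1) D) :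
    D (hA ((Finset.Icc t b).val.map fun m => (X m : MvPolynomial ℕ ℤ)) j) =
      -hA ((Finset.Icc (t - 1) b).val.map fun m => (X m : MvPolynomial ℕ ℤ)) (j - 1) := by
  have hi : t - 1 + 1 = t := by omega
  set c : MvPolynomial ℕ ℤ := X (t - 1) with hc
  set a : MvPolynomial ℕ ℤ := X t with ha
  have hne : c - a ≠ 0 := sub_ne_zero.mpr fun h =>
    absurd (MvPolynomial.X_injective h) (by omega)
  have hIcc : (Finset.Icc t b).val = t ::ₘ (Finset.Ioc t b).val := by
    rw [Finset.Icc_eq_cons_Ioc htb, Finset.cons_val]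
  have hIcc' : (Finset.Icc (t - 1) b).val = (t - 1) ::ₘ t ::ₘ (Finset.Ioc t b).val := by
    rw [Finset.Icc_eq_cons_Ioc (by omega : t - 1 ≤ b), Finset.cons_val,
      show Finset.Ioc (t - 1) b = Finset.Icc t b from by
        rw [← hi]; exact (Finset.Icc_add_one_left_eq_Ioc _ _).symm, hIcc]
  set B : Multiset (MvPolynomial ℕ ℤ) := (Finset.Ioc t b).val.map (fun m => X m) with hB
  have hA1 : ((Finset.Icc t b).val.map fun m => (X m : MvPolynomial ℕ ℤ)) = a ::ₘ B := by
    rw [hIcc, Multiset.map_cons]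
  have hA2 : ((Finset.Icc (t - 1) b).val.map fun m => (X m : MvPolynomial ℕ ℤ))
      = c ::ₘ a ::ₘ B := by
    rw [hIcc', Multiset.map_cons, Multiset.map_cons]
  have h1 : sN (t - 1) a = c := by
    rw [ha, hc, sN, rename_X, hi, Equiv.swap_apply_right]
  have h2 : B.map (sN (t - 1)) = B := by
    rw [hB, Multiset.map_map]
    refine Multiset.map_congr rfl fun m hm => ?_
    have hm' : t < m := (Finset.mem_Ioc.mp hm).1
    show sN (t - 1) (X m) = X m
    rw [sN, rename_X, Equiv.swap_apply_of_ne_of_ne (by omega) (by omega)]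
  have hswap : (a ::ₘ B).map (sN (t - 1)) = c ::ₘ B := by
    rw [Multiset.map_cons, h1, h2]
  have hs : sN (t - 1) (hA (a ::ₘ B) j) = hA (c ::ₘ B) j := by
    rw [show sN (t - 1) (hA (a ::ₘ B) j)
        = (sN (t - 1)).toRingHom (hA (a ::ₘ B) j) from rfl, map_hA]
    exact congrArg (fun M => hA M j) hswap
  have key : hA (a ::ₘ B) j - hA (c ::ₘ B) j = (a - c) * hA (c ::ₘ a ::ₘ B) (j - 1) := by
    unfold hA
    rw [hGen_cons, hGen_cons, ← map_sub, ← sub_mul, geomInv_sub]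
    have hre : (PowerSeries.C a - PowerSeries.C c) * PowerSeries.X
          * (geomInv a * geomInv c) * hGen B
        = PowerSeries.C (a - c) * (PowerSeries.X * hGen (c ::ₘ a ::ₘ B)) := by
      rw [hGen_cons, hGen_cons, map_sub]; ring
    rw [hre]
    obtain ⟨k, rfl⟩ : ∃ k, j = k + 1 := ⟨j - 1, by omega⟩
    rw [PowerSeries.coeff_C_mul, PowerSeries.coeff_succ_X_mul]
    simp
  have hD' := hD (hA (a ::ₘ B) j)
  rw [hi] at hD'
  rw [hA1, hA2]
  apply mul_left_cancel₀ hne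
  rw [hD', hs, key]
  ring
end

section
/- The 1-cochain υ on the fine cubulation of the cube [0,3]^b is a coboundary: there exists a function G : ([0,3]^b ∩ Z^b) → Z with G(0,...,0) = 0 whose coboundary is υ, and such a G is unique. -/
/-- The 1-cochain `υ` on the fine cubulation of `[0,3]^b`.  For a coordinate direction
`i`, a vertex with coordinates `ε` away from `i`, and `j ∈ {0,1,2}`, `upsilon b d l i ε j`
is the value assigned to the edge between the vertices with `i`-th coordinate `j` and
`j+1`.  (It only depends on the coordinates `ε k` for `k ≠ i`.) -/
def upsilon (b : ℕ) (d l : ℤ) (i : Fin b) (ε : Fin b → Fin 4) (j : Fin 3) : ℤ :=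
  if j = 0 then
    2 * ((Finset.univ.filter fun k : Fin b => i < k ∧ (ε k = 0 ∨ ε k = 1)).card : ℤ) - d
  else if j = 1 then
    -2 * ((Finset.univ.filter fun k : Fin b => k < i ∧ (ε k = 1 ∨ ε k = 2)).card : ℤ)
      - 2 - 2 * l
  else
    2 * ((Finset.univ.filter fun k : Fin b => i < k ∧ (ε k = 2 ∨ ε k = 3)).card : ℤ) - d

namespace UpsAux

variable {b : ℕ}

lemma fin4_cases (v : Fin 4) : v = 0 ∨ v = 1 ∨ v = 2 ∨ v = 3 := by
  fin_cases v <;> simp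

lemma sum_update {M : Type*} [AddCommMonoid M] (h : Fin b → Fin 4 → M)
    (ε : Fin b → Fin 4) (i : Fin b) (a : Fin 4) :
    ∑ k, h k (Function.update ε i a k)
      = h i a + ∑ k ∈ Finset.univ.erase i, h k (ε k) := by
  rw [← Finset.add_sum_erase _ (fun k => h k (Function.update ε i a k)) (Finset.mem_univ i),
    Function.update_self]
  congr 1
  refine Finset.sum_congr rfl fun k hk => ?_
  rw [Function.update_of_ne (Finset.ne_of_mem_erase hk)]

lemma double_update (w : Fin b → Fin b → Fin 4 → Fin 4 → ℤ) (ε : Fin b → Fin 4)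
    (i : Fin b) (a : Fin 4) :
    ∑ k, ∑ m, w k m (Function.update ε i a k) (Function.update ε i a m)
      = w i i a a + ((∑ m ∈ Finset.univ.erase i, w i m a (ε m))
        + ((∑ k ∈ Finset.univ.erase i, w k i (ε k) a)
        + ∑ k ∈ Finset.univ.erase i, ∑ m ∈ Finset.univ.erase i, w k m (ε k) (ε m))) := by
  rw [sum_update (fun k x => ∑ m, w k m x (Function.update ε i a m)),
    sum_update (fun m y => w i m a y), add_assoc]
  congr 1
  congr 1
  rw [← Finset.sum_add_distrib]
  refine Finset.sum_congr rfl fun k hk => ?_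
  exact sum_update (fun m y => w k m (ε k) y) ε i a

lemma card_filter_int (p : Fin b → Prop) [DecidablePred p] (i : Fin b) (hp : ¬ p i) :
    ((Finset.univ.filter p).card : ℤ)
      = ∑ k ∈ Finset.univ.erase i, if p k then (1:ℤ) else 0 := by
  have : ((Finset.univ.filter p).card : ℤ) = ∑ k : Fin b, if p k then (1:ℤ) else 0 := by
    rw [Finset.card_filter]
    push_cast
    rfl
  rw [this, ← Finset.add_sum_erase _ _ (Finset.mem_univ i), if_neg hp, zero_add]

lemma count_gt (i : Fin b) :
    (∑ k ∈ Finset.univ.erase i, if i < k then (1:ℤ) else 0) = (b : ℤ) - 1 - (i : ℤ) := by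
  have h1 : (∑ k ∈ Finset.univ.erase i, if i < k then (1:ℤ) else 0)
      = ((Finset.univ.filter fun k => i < k).card : ℤ) := by
    rw [card_filter_int (fun k => i < k) i (lt_irrefl i)]
  have h2 : (Finset.univ.filter fun k : Fin b => i < k) = Finset.Ioi i := by
    ext k; simp
  rw [h1, h2, Fin.card_Ioi]
  have := i.isLt
  omega

/-- single-coordinate part of `G` -/
def fA (b : ℕ) (d l : ℤ) (i : Fin b) (v : Fin 4) : ℤ :=
  if v = 0 then 0
  else if v = 1 then d - 2 * ((b : ℤ) - 1 - (i : ℤ))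
  else if v = 2 then d - 2 * ((b : ℤ) - 1 - (i : ℤ)) + (2 + 2 * l)
  else 2 * d - 2 * ((b : ℤ) - 1 - (i : ℤ)) + (2 + 2 * l)

/-- pair-interaction weight -/
def wP (k m : Fin b) (x y : Fin 4) : ℤ :=
  if k < m ∧ (x = 1 ∨ x = 2) ∧ (y = 2 ∨ y = 3) then 1 else 0

/-- the function `G` -/
def Gd (b : ℕ) (d l : ℤ) (ε : Fin b → Fin 4) : ℤ :=
  (∑ k, fA b d l k (ε k)) + 2 * ∑ k, ∑ m, wP k m (ε k) (ε m)

lemma Gd_zero (d l : ℤ) : Gd b d l (fun _ => 0) = 0 := by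
  simp [Gd, fA, wP]

lemma Gd_edge (d l : ℤ) (ε : Fin b → Fin 4) (i : Fin b) (j : Fin 3) :
    Gd b d l (Function.update ε i j.castSucc) - Gd b d l (Function.update ε i j.succ)
      = upsilon b d l i ε j := by
  have wii : ∀ a : Fin 4, wP i i a a = 0 := fun a => by simp [wP]
  have key : ∀ a : Fin 4, Gd b d l (Function.update ε i a)
      = fA b d l i a + (∑ k ∈ Finset.univ.erase i, fA b d l k (ε k))
        + 2 * (wP i i a a + ((∑ m ∈ Finset.univ.erase i, wP i m a (ε m))
          + ((∑ k ∈ Finset.univ.erase i, wP k i (ε k) a)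
          + ∑ k ∈ Finset.univ.erase i, ∑ m ∈ Finset.univ.erase i, wP k m (ε k) (ε m)))) := by
    intro a
    rw [Gd, sum_update (fA b d l), double_update]
  have diff : ∀ a1 a2 : Fin 4,
      Gd b d l (Function.update ε i a1) - Gd b d l (Function.update ε i a2)
        = (fA b d l i a1 - fA b d l i a2)
          + 2 * (((∑ m ∈ Finset.univ.erase i, wP i m a1 (ε m))
              - ∑ m ∈ Finset.univ.erase i, wP i m a2 (ε m))
            + ((∑ k ∈ Finset.univ.erase i, wP k i (ε k) a1)
              - ∑ k ∈ Finset.univ.erase i, wP k i (ε k) a2)) := by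
    intro a1 a2
    rw [key, key, wii, wii]
    ring
  fin_cases j
  · -- j = 0
    show Gd b d l (Function.update ε i 0) - Gd b d l (Function.update ε i 1)
      = upsilon b d l i ε 0
    rw [upsilon, if_pos rfl, diff]
    have hS0 : (∑ m ∈ Finset.univ.erase i, wP i m 0 (ε m)) = 0 :=
      Finset.sum_eq_zero fun m _ => by simp [wP]
    have hS1 : (∑ m ∈ Finset.univ.erase i, wP i m 1 (ε m))
        = ∑ m ∈ Finset.univ.erase i, if i < m ∧ (ε m = 2 ∨ ε m = 3) then (1:ℤ) else 0 :=
      Finset.sum_congr rfl fun m _ => by simp [wP]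
    have hT0 : (∑ k ∈ Finset.univ.erase i, wP k i (ε k) 0) = 0 :=
      Finset.sum_eq_zero fun k _ => by simp [wP]
    have hT1 : (∑ k ∈ Finset.univ.erase i, wP k i (ε k) 1) = 0 :=
      Finset.sum_eq_zero fun k _ => by simp [wP]
    have hcomp : (∑ m ∈ Finset.univ.erase i, if i < m ∧ (ε m = 2 ∨ ε m = 3) then (1:ℤ) else 0)
        + (∑ k ∈ Finset.univ.erase i, if i < k ∧ (ε k = 0 ∨ ε k = 1) then (1:ℤ) else 0)
        = ∑ k ∈ Finset.univ.erase i, if i < k then (1:ℤ) else 0 := by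
      rw [← Finset.sum_add_distrib]
      refine Finset.sum_congr rfl fun m _ => ?_
      rcases fin4_cases (ε m) with h | h | h | h <;> rw [h] <;> simp
    rw [count_gt] at hcomp
    rw [card_filter_int _ i (by simp), hS0, hS1, hT0, hT1]
    have hf0 : fA b d l i 0 = 0 := by simp [fA]
    have hf1 : fA b d l i 1 = d - 2 * ((b : ℤ) - 1 - (i : ℤ)) := by simp [fA]
    rw [hf0, hf1]
    linarith [hcomp]
  · -- j = 1
    show Gd b d l (Function.update ε i 1) - Gd b d l (Function.update ε i 2)
      = upsilon b d l i ε 1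
    rw [upsilon, if_neg (by decide), if_pos rfl, diff]
    have hS : (∑ m ∈ Finset.univ.erase i, wP i m 1 (ε m))
        = ∑ m ∈ Finset.univ.erase i, wP i m 2 (ε m) :=
      Finset.sum_congr rfl fun m _ => by simp [wP]
    have hT1 : (∑ k ∈ Finset.univ.erase i, wP k i (ε k) 1) = 0 :=
      Finset.sum_eq_zero fun k _ => by simp [wP]
    have hT2 : (∑ k ∈ Finset.univ.erase i, wP k i (ε k) 2)
        = ∑ k ∈ Finset.univ.erase i, if k < i ∧ (ε k = 1 ∨ ε k = 2) then (1:ℤ) else 0 :=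
      Finset.sum_congr rfl fun k _ => by simp [wP]
    rw [card_filter_int _ i (by simp), hS, hT1, hT2]
    have hf1 : fA b d l i 1 = d - 2 * ((b : ℤ) - 1 - (i : ℤ)) := by simp [fA]
    have hf2 : fA b d l i 2 = d - 2 * ((b : ℤ) - 1 - (i : ℤ)) + (2 + 2 * l) := by simp [fA]
    rw [hf1, hf2]
    ring
  · -- j = 2
    show Gd b d l (Function.update ε i 2) - Gd b d l (Function.update ε i 3)
      = upsilon b d l i ε 2
    rw [upsilon, if_neg (by decide), if_neg (by decide), diff]
    have hS2 : (∑ m ∈ Finset.univ.erase i, wP i m 2 (ε m))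
        = ∑ m ∈ Finset.univ.erase i, if i < m ∧ (ε m = 2 ∨ ε m = 3) then (1:ℤ) else 0 :=
      Finset.sum_congr rfl fun m _ => by simp [wP]
    have hS3 : (∑ m ∈ Finset.univ.erase i, wP i m 3 (ε m)) = 0 :=
      Finset.sum_eq_zero fun m _ => by simp [wP]
    have hT : (∑ k ∈ Finset.univ.erase i, wP k i (ε k) 2)
        = ∑ k ∈ Finset.univ.erase i, wP k i (ε k) 3 :=
      Finset.sum_congr rfl fun k _ => by simp [wP]
    rw [card_filter_int _ i (by simp), hS2, hS3, hT]
    have hf2 : fA b d l i 2 = d - 2 * ((b : ℤ) - 1 - (i : ℤ)) + (2 + 2 * l) := by simp [fA]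
    have hf3 : fA b d l i 3 = 2 * d - 2 * ((b : ℤ) - 1 - (i : ℤ)) + (2 + 2 * l) := by simp [fA]
    rw [hf2, hf3]
    ring

end UpsAux

/-- The 1-cochain `υ` is a coboundary: there is a unique function
`G : [0,3]^b ∩ ℤ^b → ℤ` with `G(0,…,0) = 0` whose coboundary is `υ`, i.e. for every
edge of the fine cubulation (in direction `i`, between `i`-th coordinates `j` and `j+1`)
we have `G(…,j,…) - G(…,j+1,…) = υ` of that edge. -/
theorem upsilon_is_coboundary (b : ℕ) (hb : 1 ≤ b) (d l : ℤ) :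
    ∃! G : (Fin b → Fin 4) → ℤ,
      G (fun _ => 0) = 0 ∧
      ∀ (ε : Fin b → Fin 4) (i : Fin b) (j : Fin 3),
        G (Function.update ε i j.castSucc) - G (Function.update ε i j.succ) =
          upsilon b d l i ε j := by
  refine ⟨UpsAux.Gd b d l, ⟨UpsAux.Gd_zero d l, fun ε i j => UpsAux.Gd_edge d l ε i j⟩, ?_⟩
  rintro G' ⟨h0, hedge⟩
  have key : ∀ n (ε : Fin b → Fin 4), (∑ k, (ε k).val) = n → G' ε = UpsAux.Gd b d l ε := by
    intro n
    induction n using Nat.strong_induction_on with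
    | _ n ih =>
      intro ε hn
      by_cases hz : ε = fun _ => 0
      · rw [hz, h0, UpsAux.Gd_zero]
      · have hex : ∃ i, ε i ≠ 0 := by
          by_contra h
          push_neg at h
          exact hz (funext fun i => h i)
        obtain ⟨i, hi⟩ := hex
        have hval : 1 ≤ (ε i).val := by
          rcases Nat.eq_zero_or_pos (ε i).val with h | h
          · exact absurd (Fin.ext h) hi
          · exact h
        have hlt4 : (ε i).val < 4 := (ε i).isLt
        set j : Fin 3 := ⟨(ε i).val - 1, by omega⟩ with hj
        have hsucc : j.succ = ε i := by
          apply Fin.ext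
          simp only [Fin.val_succ, hj]
          omega
        have hupd : Function.update ε i j.succ = ε := by
          rw [hsucc]; exact Function.update_eq_self i ε
        have h1 := hedge ε i j
        have h2 := UpsAux.Gd_edge (b := b) d l ε i j
        rw [hupd] at h1 h2
        have hs1 : (∑ k, (Function.update ε i j.castSucc k).val)
            = j.castSucc.val + ∑ k ∈ Finset.univ.erase i, (ε k).val :=
          UpsAux.sum_update (fun _ v => v.val) ε i j.castSucc
        have hs2 : (∑ k, (ε k).val) = (ε i).val + ∑ k ∈ Finset.univ.erase i, (ε k).val :=
          (Finset.add_sum_erase _ _ (Finset.mem_univ i)).symm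
        have hcs : j.castSucc.val = (ε i).val - 1 := by
          simp [Fin.coe_castSucc, hj]
        have hIH : G' (Function.update ε i j.castSucc)
            = UpsAux.Gd b d l (Function.update ε i j.castSucc) := by
          refine ih _ ?_ _ rfl
          rw [hs1, hcs]
          omega
        linarith [h1, h2, hIH]
  exact funext fun ε => key _ ε rfl
end

section
/- The grading function G on [0,3]^b ∩ Z^b satisfies the duality relation: for every vertex ε, (G(ε) + G(ε*))/2 = C(a+2, 2) - C(a-b+2, 2), where ε* = (3-ε_1, ..., 3-ε_b) and C denotes binomial coefficients. Equivalently, G(ε) + G(ε*) is independent of ε and equals G(3,...,3). -/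
/-! ### Auxiliary definitions and lemmas -/

/-- Number of coordinates beyond `i` lying in `{0,1}`. -/
def Acount (b : ℕ) (ε : Fin b → Fin 4) (i : Fin b) : ℤ :=
  ((Finset.univ.filter fun k : Fin b => i < k ∧ (ε k = 0 ∨ ε k = 1)).card : ℤ)

/-- Number of coordinates beyond `i` lying in `{2,3}`. -/
def Bcount (b : ℕ) (ε : Fin b → Fin 4) (i : Fin b) : ℤ :=
  ((Finset.univ.filter fun k : Fin b => i < k ∧ (ε k = 2 ∨ ε k = 3)).card : ℤ)

/-- The contribution of the `i`-th coordinate to the explicit formula for `G`. -/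
def contrib (b : ℕ) (d l : ℤ) (ε : Fin b → Fin 4) (i : Fin b) : ℤ :=
  if ε i = 0 then 0
  else if ε i = 1 then d - 2 * Acount b ε i
  else if ε i = 2 then d - 2 * Acount b ε i + 2 + 2 * l
  else 2 * d + 2 + 2 * l - 2 * Acount b ε i - 2 * Bcount b ε i

/-- The explicit formula for the grading function. -/
def Ffun (b : ℕ) (d l : ℤ) (ε : Fin b → Fin 4) : ℤ := ∑ i, contrib b d l ε i

/-- The dual vertex. -/
def dstar (b : ℕ) (ε : Fin b → Fin 4) : Fin b → Fin 4 :=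
  fun i => (⟨3 - (ε i : ℕ), by omega⟩ : Fin 4)

lemma fin4_cases (x : Fin 4) : x = 0 ∨ x = 1 ∨ x = 2 ∨ x = 3 := by
  fin_cases x <;> simp

lemma upsilon_zero (b : ℕ) (d l : ℤ) (i : Fin b) (ε : Fin b → Fin 4) :
    upsilon b d l i ε 0 =
      2 * ((Finset.univ.filter fun k : Fin b => i < k ∧ (ε k = 0 ∨ ε k = 1)).card : ℤ) - d := by
  rw [upsilon, if_pos rfl]

lemma upsilon_one (b : ℕ) (d l : ℤ) (i : Fin b) (ε : Fin b → Fin 4) :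
    upsilon b d l i ε 1 =
      -2 * ((Finset.univ.filter fun k : Fin b => k < i ∧ (ε k = 1 ∨ ε k = 2)).card : ℤ)
        - 2 - 2 * l := by
  rw [upsilon, if_neg (by decide), if_pos rfl]

lemma upsilon_two (b : ℕ) (d l : ℤ) (i : Fin b) (ε : Fin b → Fin 4) :
    upsilon b d l i ε 2 =
      2 * ((Finset.univ.filter fun k : Fin b => i < k ∧ (ε k = 2 ∨ ε k = 3)).card : ℤ) - d := by
  rw [upsilon, if_neg (by decide), if_neg (by decide)]

lemma Acount_congr (b : ℕ) (ε ε' : Fin b → Fin 4) (i : Fin b)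
    (h : ∀ k, i < k → ε k = ε' k) : Acount b ε i = Acount b ε' i := by
  unfold Acount
  rw [Finset.filter_congr (fun k _ => and_congr_right fun hk => by rw [h k hk])]

lemma Bcount_congr (b : ℕ) (ε ε' : Fin b → Fin 4) (i : Fin b)
    (h : ∀ k, i < k → ε k = ε' k) : Bcount b ε i = Bcount b ε' i := by
  unfold Bcount
  rw [Finset.filter_congr (fun k _ => and_congr_right fun hk => by rw [h k hk])]

lemma Acount_dstar (b : ℕ) (ε : Fin b → Fin 4) (i : Fin b) :
    Acount b (dstar b ε) i = Bcount b ε i := by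
  unfold Acount Bcount
  have key : ∀ k ∈ Finset.univ,
      (i < k ∧ (dstar b ε k = 0 ∨ dstar b ε k = 1)) ↔ (i < k ∧ (ε k = 2 ∨ ε k = 3)) := by
    intro k _
    refine and_congr_right fun _ => ?_
    have hv : (dstar b ε k : ℕ) = 3 - (ε k : ℕ) := rfl
    have h4 := (ε k).isLt
    simp only [Fin.ext_iff, hv, show ((0 : Fin 4) : ℕ) = 0 from rfl,
      show ((1 : Fin 4) : ℕ) = 1 from rfl, show ((2 : Fin 4) : ℕ) = 2 from rfl,
      show ((3 : Fin 4) : ℕ) = 3 from rfl]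
    omega
  rw [Finset.filter_congr key]

lemma Bcount_dstar (b : ℕ) (ε : Fin b → Fin 4) (i : Fin b) :
    Bcount b (dstar b ε) i = Acount b ε i := by
  unfold Acount Bcount
  have key : ∀ k ∈ Finset.univ,
      (i < k ∧ (dstar b ε k = 2 ∨ dstar b ε k = 3)) ↔ (i < k ∧ (ε k = 0 ∨ ε k = 1)) := by
    intro k _
    refine and_congr_right fun _ => ?_
    have hv : (dstar b ε k : ℕ) = 3 - (ε k : ℕ) := rfl
    have h4 := (ε k).isLt
    simp only [Fin.ext_iff, hv, show ((0 : Fin 4) : ℕ) = 0 from rfl,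
      show ((1 : Fin 4) : ℕ) = 1 from rfl, show ((2 : Fin 4) : ℕ) = 2 from rfl,
      show ((3 : Fin 4) : ℕ) = 3 from rfl]
    omega
  rw [Finset.filter_congr key]

lemma contrib_eq0 {b : ℕ} {d l : ℤ} {ε : Fin b → Fin 4} {i : Fin b} (h : ε i = 0) :
    contrib b d l ε i = 0 := by
  rw [contrib, if_pos h]

lemma contrib_eq1 {b : ℕ} {d l : ℤ} {ε : Fin b → Fin 4} {i : Fin b} (h : ε i = 1) :
    contrib b d l ε i = d - 2 * Acount b ε i := by
  rw [contrib, if_neg (by rw [h]; decide), if_pos h]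

lemma contrib_eq2 {b : ℕ} {d l : ℤ} {ε : Fin b → Fin 4} {i : Fin b} (h : ε i = 2) :
    contrib b d l ε i = d - 2 * Acount b ε i + 2 + 2 * l := by
  rw [contrib, if_neg (by rw [h]; decide), if_neg (by rw [h]; decide), if_pos h]

lemma contrib_eq3 {b : ℕ} {d l : ℤ} {ε : Fin b → Fin 4} {i : Fin b} (h : ε i = 3) :
    contrib b d l ε i = 2 * d + 2 + 2 * l - 2 * Acount b ε i - 2 * Bcount b ε i := by
  rw [contrib, if_neg (by rw [h]; decide), if_neg (by rw [h]; decide),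
    if_neg (by rw [h]; decide)]

lemma Acount_add_Bcount (b : ℕ) (ε : Fin b → Fin 4) (i : Fin b) :
    Acount b ε i + Bcount b ε i = (b : ℤ) - 1 - (i : ℤ) := by
  unfold Acount Bcount
  have hdisj : Disjoint
      (Finset.univ.filter fun k : Fin b => i < k ∧ (ε k = 0 ∨ ε k = 1))
      (Finset.univ.filter fun k : Fin b => i < k ∧ (ε k = 2 ∨ ε k = 3)) := by
    rw [Finset.disjoint_left]
    intro k hk1 hk2
    simp only [Finset.mem_filter] at hk1 hk2
    rcases hk1.2.2 with h | h <;> rcases hk2.2.2 with h' | h' <;>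
      rw [h] at h' <;> exact absurd h' (by decide)
  have hunion :
      (Finset.univ.filter fun k : Fin b => i < k ∧ (ε k = 0 ∨ ε k = 1)) ∪
      (Finset.univ.filter fun k : Fin b => i < k ∧ (ε k = 2 ∨ ε k = 3)) =
      (Finset.univ.filter fun k : Fin b => i < k) := by
    rw [← Finset.filter_or]
    refine Finset.filter_congr fun k _ => ?_
    rcases fin4_cases (ε k) with h | h | h | h <;> simp [h]
  have hcard : (Finset.univ.filter fun k : Fin b => i < k).card = b - 1 - (i : ℕ) := by
    have : (Finset.univ.filter fun k : Fin b => i < k) = Finset.Ioi i := by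
      ext k; simp
    rw [this, Fin.card_Ioi]
  have := Finset.card_union_of_disjoint hdisj
  rw [hunion, hcard] at this
  have hi := i.isLt
  omega

lemma two_mul_choose_two : ∀ n : ℕ, 2 * n.choose 2 = n * (n - 1)
  | 0 => rfl
  | (n + 1) => by
    rw [Nat.choose_succ_succ, Nat.mul_add, two_mul_choose_two n, Nat.choose_one_right,
      Nat.add_sub_cancel]
    cases n with
    | zero => rfl
    | succ m => rw [Nat.succ_sub_one]; ring

/-- The grading function is given by the explicit formula `Ffun`. -/
lemma G_eq_F (b : ℕ) (d l : ℤ) (G : (Fin b → Fin 4) → ℤ)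
    (hG0 : G (fun _ => 0) = 0)
    (hG : ∀ (ε : Fin b → Fin 4) (i : Fin b) (j : Fin 3),
      G (Function.update ε i j.castSucc) - G (Function.update ε i j.succ) =
        upsilon b d l i ε j)
    (ε : Fin b → Fin 4) : G ε = Ffun b d l ε := by
  suffices H : ∀ n (ε : Fin b → Fin 4), (∑ i, (ε i : ℕ)) = n → G ε = Ffun b d l ε from
    H _ ε rfl
  intro n
  induction n using Nat.strong_induction_on with
  | _ n IH =>
    intro ε hn
    by_cases h0 : ∀ i, ε i = 0
    · have hε : ε = fun _ => 0 := funext h0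
      rw [hε, hG0]
      simp [Ffun, contrib]
    · push_neg at h0
      obtain ⟨i0, hi0⟩ := h0
      set S := Finset.univ.filter (fun i => ε i ≠ 0) with hS
      have hSne : S.Nonempty := ⟨i0, by simp [hS, hi0]⟩
      set i := S.min' hSne with hidef
      have hi : ε i ≠ 0 := (Finset.mem_filter.mp (S.min'_mem hSne)).2
      have hmin : ∀ k, k < i → ε k = 0 := by
        intro k hk
        by_contra hk0
        exact absurd (S.min'_le k (by simp [hS, hk0])) (not_le.mpr hk)
      have hv : (ε i : ℕ) ≠ 0 := by
        intro h
        exact hi (Fin.ext (by simp [h]))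
      have hv4 : (ε i : ℕ) < 4 := (ε i).isLt
      set j : Fin 3 := ⟨(ε i : ℕ) - 1, by omega⟩ with hj
      set ε' : Fin b → Fin 4 := Function.update ε i ⟨(ε i : ℕ) - 1, by omega⟩ with hε'
      have hsucc : Function.update ε i j.succ = ε := by
        funext k
        rcases eq_or_ne k i with rfl | hk
        · rw [Function.update_self]
          exact Fin.ext (by simp [hj]; omega)
        · rw [Function.update_of_ne hk]
      have hcast : Function.update ε i j.castSucc = ε' := by
        rw [hε']
        exact congrArg (Function.update ε i) (Fin.ext rfl)
      have key := hG ε i j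
      rw [hcast, hsucc] at key
      -- weight of ε'
      have ha' : (ε' i : ℕ) + ∑ k ∈ Finset.univ.erase i, (ε' k : ℕ) = ∑ k, (ε' k : ℕ) := by
        simpa using Finset.add_sum_erase Finset.univ (fun k => ((ε' k : ℕ))) (Finset.mem_univ i)
      have ha : (ε i : ℕ) + ∑ k ∈ Finset.univ.erase i, (ε k : ℕ) = ∑ k, (ε k : ℕ) := by
        simpa using Finset.add_sum_erase Finset.univ (fun k => ((ε k : ℕ))) (Finset.mem_univ i)
      have hee : ∑ k ∈ Finset.univ.erase i, ((ε' k : ℕ)) =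
          ∑ k ∈ Finset.univ.erase i, (ε k : ℕ) :=
        Finset.sum_congr rfl fun k hk => by
          rw [hε', Function.update_of_ne (Finset.ne_of_mem_erase hk)]
      have hvi : (ε' i : ℕ) = (ε i : ℕ) - 1 := by rw [hε', Function.update_self]
      have hw : ∑ k, (ε' k : ℕ) = n - 1 := by omega
      have hn1 : 1 ≤ n := by
        have := Finset.single_le_sum (f := fun k => ((ε k : ℕ)))
          (fun _ _ => Nat.zero_le _) (Finset.mem_univ i)
        omega
      have hG' := IH (n - 1) (by omega) ε' hw
      -- counts unchanged at i
      have hAi : Acount b ε' i = Acount b ε i :=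
        (Acount_congr b ε ε' i fun m hm => by
          rw [hε', Function.update_of_ne (ne_of_gt hm)]).symm
      have hBi : Bcount b ε' i = Bcount b ε i :=
        (Bcount_congr b ε ε' i fun m hm => by
          rw [hε', Function.update_of_ne (ne_of_gt hm)]).symm
      -- contributions away from i unchanged
      have hsame : ∀ k, k ≠ i → contrib b d l ε' k = contrib b d l ε k := by
        intro k hk
        have hεk : ε' k = ε k := by rw [hε', Function.update_of_ne hk]
        rcases lt_trichotomy k i with h | h | h
        · simp [contrib, hεk, hmin k h]
        · exact absurd h hk
        · have hA : Acount b ε' k = Acount b ε k :=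
            (Acount_congr b ε ε' k fun m hm => by
              rw [hε', Function.update_of_ne (ne_of_gt (h.trans hm))]).symm
          have hB : Bcount b ε' k = Bcount b ε k :=
            (Bcount_congr b ε ε' k fun m hm => by
              rw [hε', Function.update_of_ne (ne_of_gt (h.trans hm))]).symm
          simp [contrib, hεk, hA, hB]
      have hsum' : Ffun b d l ε' - Ffun b d l ε =
          contrib b d l ε' i - contrib b d l ε i := by
        rw [Ffun, Ffun, ← Finset.sum_sub_distrib]
        rw [Finset.sum_eq_single i (fun k _ hk => by rw [hsame k hk, sub_self])
          (fun h => absurd (Finset.mem_univ i) h)]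
      have hFF : Ffun b d l ε' - Ffun b d l ε = upsilon b d l i ε j := by
        rw [hsum']
        rcases fin4_cases (ε i) with h | h | h | h
        · exact absurd h hi
        · have hval : (ε i : ℕ) = 1 := by rw [h]; rfl
          have hj0 : j = 0 := by rw [hj]; exact Fin.ext (by simp [hval])
          have hε'i : ε' i = 0 := by
            rw [hε', Function.update_self]; exact Fin.ext (by simp [hval])
          rw [hj0, contrib_eq0 hε'i, contrib_eq1 h, upsilon_zero, Acount]
          ring
        · have hval : (ε i : ℕ) = 2 := by rw [h]; rfl
          have hj1 : j = 1 := by rw [hj]; exact Fin.ext (by simp [hval])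
          have hε'i : ε' i = 1 := by
            rw [hε', Function.update_self]; exact Fin.ext (by simp [hval])
          have hc0 : (Finset.univ.filter fun k : Fin b => k < i ∧ (ε k = 1 ∨ ε k = 2)) = ∅ := by
            rw [Finset.filter_eq_empty_iff]
            rintro k - ⟨hk, hor⟩
            rw [hmin k hk] at hor
            rcases hor with h' | h' <;> exact absurd h' (by decide)
          rw [hj1, contrib_eq1 hε'i, contrib_eq2 h, hAi, upsilon_one, hc0,
            Finset.card_empty]
          push_cast
          ring
        · have hval : (ε i : ℕ) = 3 := by rw [h]; rfl
          have hj2 : j = 2 := by rw [hj]; exact Fin.ext (by simp [hval])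
          have hε'i : ε' i = 2 := by
            rw [hε', Function.update_self]; exact Fin.ext (by simp [hval])
          rw [hj2, contrib_eq2 hε'i, contrib_eq3 h, hAi, upsilon_two, Bcount]
          ring
      -- conclude
      have : G ε = G ε' - upsilon b d l i ε j := by linarith [key]
      rw [this, hG']
      linarith [hFF]

/-- Duality for the explicit formula. -/
lemma F_dual (b : ℕ) (d l : ℤ) (ε : Fin b → Fin 4) :
    Ffun b d l ε + Ffun b d l (dstar b ε) =
      ∑ i : Fin b, (2 * d + 2 + 2 * l - 2 * ((b : ℤ) - 1 - (i : ℤ))) := by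
  rw [Ffun, Ffun, ← Finset.sum_add_distrib]
  refine Finset.sum_congr rfl fun i _ => ?_
  have hA := Acount_dstar b ε i
  have hB := Bcount_dstar b ε i
  have hAB := Acount_add_Bcount b ε i
  rcases fin4_cases (ε i) with h | h | h | h
  · have hs : dstar b ε i = 3 := by
      have hv : (ε i : ℕ) = 0 := by rw [h]; rfl
      exact Fin.ext (show 3 - (ε i : ℕ) = _ by rw [hv]; rfl)
    rw [contrib_eq0 h, contrib_eq3 hs, hA, hB]
    linarith
  · have hs : dstar b ε i = 2 := by
      have hv : (ε i : ℕ) = 1 := by rw [h]; rfl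
      exact Fin.ext (show 3 - (ε i : ℕ) = _ by rw [hv]; rfl)
    rw [contrib_eq1 h, contrib_eq2 hs, hA]
    linarith
  · have hs : dstar b ε i = 1 := by
      have hv : (ε i : ℕ) = 2 := by rw [h]; rfl
      exact Fin.ext (show 3 - (ε i : ℕ) = _ by rw [hv]; rfl)
    rw [contrib_eq2 h, contrib_eq1 hs, hA]
    linarith
  · have hs : dstar b ε i = 0 := by
      have hv : (ε i : ℕ) = 3 := by rw [h]; rfl
      exact Fin.ext (show 3 - (ε i : ℕ) = _ by rw [hv]; rfl)
    rw [contrib_eq3 h, contrib_eq0 hs]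
    linarith

/-- Duality for the grading function: if `G` has coboundary `υ` (with `l = c - b`) and
`G(0,…,0) = 0`, then for every vertex `ε`, with dual vertex `ε* = (3-ε_1, …, 3-ε_b)`,
`(G(ε) + G(ε*))/2 = C(a+2,2) - C(a-b+2,2)`. -/
theorem grading_function_duality (a b c d : ℕ)
    (ha : 0 < a) (hb : 0 < b) (hc : 0 < c) (hd : 0 < d)
    (hsum : a + b = c + d) (hba : b ≤ a) (hbc : b ≤ c) (hbd : b ≤ d)
    (G : (Fin b → Fin 4) → ℤ)
    (hG0 : G (fun _ => 0) = 0)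
    (hG : ∀ (ε : Fin b → Fin 4) (i : Fin b) (j : Fin 3),
      G (Function.update ε i j.castSucc) - G (Function.update ε i j.succ) =
        upsilon b (d : ℤ) ((c : ℤ) - (b : ℤ)) i ε j)
    (ε : Fin b → Fin 4) :
    G ε + G (fun i => (⟨3 - (ε i : ℕ), by omega⟩ : Fin 4)) =
      2 * (((a + 2).choose 2 : ℤ) - ((a - b + 2).choose 2 : ℤ)) := by
  set l : ℤ := (c : ℤ) - (b : ℤ) with hl
  have h1 := G_eq_F b (d : ℤ) l G hG0 hG ε
  have h2 := G_eq_F b (d : ℤ) l G hG0 hG (dstar b ε)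
  have h3 := F_dual b (d : ℤ) l ε
  -- Gauss sum
  have hT : (∑ i : Fin b, (i : ℤ)) * 2 = (b : ℤ) * ((b : ℤ) - 1) := by
    have hh := Finset.sum_range_id_mul_two b
    have hT' : (∑ i : Fin b, (i : ℤ)) = ((∑ i ∈ Finset.range b, i : ℕ) : ℤ) := by
      rw [Fin.sum_univ_eq_sum_range (fun i => (i : ℤ)) b]
      push_cast
      rfl
    rw [hT']
    rw [show ((b : ℤ) - 1) = ((b - 1 : ℕ) : ℤ) by omega]
    exact_mod_cast hh
  have hsumval : (∑ i : Fin b, (2 * (d : ℤ) + 2 + 2 * l - 2 * ((b : ℤ) - 1 - (i : ℤ)))) =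
      (b : ℤ) * (2 * (d : ℤ) + 2 + 2 * l) - (b : ℤ) * ((b : ℤ) - 1) := by
    have hrw : ∀ i : Fin b, (2 * (d : ℤ) + 2 + 2 * l - 2 * ((b : ℤ) - 1 - (i : ℤ))) =
        (2 * (d : ℤ) + 2 + 2 * l - 2 * (b : ℤ) + 2) + 2 * (i : ℤ) := fun i => by ring
    rw [Finset.sum_congr rfl (fun i _ => hrw i), Finset.sum_add_distrib,
      Finset.sum_const, ← Finset.mul_sum, Finset.card_univ, Fintype.card_fin]
    rw [nsmul_eq_mul]
    push_cast
    linarith [hT]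
  have hX : (((a + 2).choose 2 : ℕ) : ℤ) * 2 = ((a : ℤ) + 2) * ((a : ℤ) + 1) := by
    have h0 := two_mul_choose_two (a + 2)
    have e : a + 2 - 1 = a + 1 := by omega
    rw [e] at h0
    have h1 := congrArg (fun n : ℕ => (n : ℤ)) h0
    push_cast at h1
    linarith
  have hY : (((a - b + 2).choose 2 : ℕ) : ℤ) * 2 =
      ((a : ℤ) - (b : ℤ) + 2) * ((a : ℤ) - (b : ℤ) + 1) := by
    have h0 := two_mul_choose_two (a - b + 2)
    have e : a - b + 2 - 1 = a - b + 1 := by omega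
    rw [e] at h0
    have h1 := congrArg (fun n : ℕ => (n : ℤ)) h0
    push_cast [Nat.cast_sub hba] at h1
    linarith
  have hsumZ : (a : ℤ) + (b : ℤ) = (c : ℤ) + (d : ℤ) := by exact_mod_cast hsum
  have hGε : G ε + G (fun i => (⟨3 - (ε i : ℕ), by omega⟩ : Fin 4)) =
      (b : ℤ) * (2 * (d : ℤ) + 2 + 2 * l) - (b : ℤ) * ((b : ℤ) - 1) := by
    calc G ε + G (fun i => (⟨3 - (ε i : ℕ), by omega⟩ : Fin 4))
        = Ffun b (d : ℤ) l ε + Ffun b (d : ℤ) l (dstar b ε) := by rw [← h1, ← h2]; rfl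
      _ = _ := by rw [h3, hsumval]
  rw [hGε, hl]
  linear_combination -hX + hY - 2 * (b : ℤ) * hsumZ
end
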